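/- Let k be a field with char(k) ∤ n+1, n ≥ 2, λ ∈ k, and ζ a primitive (n+1)-th root of unity in k. The fixed point set in the Dwork hypersurface X_λ of the involution σ : (x_0:x_1:x_2:…) ↦ (ζ x_1 : ζ^{-1} x_0 : x_2 : …) is: the hyperplane section {X_0 − ζ X_1 = 0} ∩ X_λ if n is odd, and the union of this hyperplane section with the single point (1 : −ζ^{-1} : 0 : ⋯ : 0) if n is even. -/

import Mathlib

noncomputable section

variable (k : Type*) [Field k] (n : ℕ)

/-- The Dwork hypersurface `X_λ ⊂ ℙ^n`, defined by
`Σ_{i=0}^n X_i^{n+1} + λ·X_0⋯X_n = 0` (a homogeneous condition, hence well defined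
on the chosen representative of a projective point). -/
def dworkSet (lam : k) : Set (Projectivization k (Fin (n + 1) → k)) :=
  {x | ∑ i, x.rep i ^ (n + 1) + lam * ∏ i, x.rep i = 0}

/-- Coordinatewise scaling by a tuple of units, as a linear automorphism of `k^{n+1}`. -/
def scaleEquiv (ζ : Fin (n + 1) → kˣ) : (Fin (n + 1) → k) ≃ₗ[k] (Fin (n + 1) → k) :=
  LinearEquiv.piCongrRight fun i => LinearEquiv.smulOfUnit (ζ i)

/-- Coordinatewise scaling on projective space:
`(ζ_0,…,ζ_n)·(x_0:…:x_n) = (ζ_0x_0:…:ζ_nx_n)`. -/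
def scaleP (ζ : Fin (n + 1) → kˣ) :
    Projectivization k (Fin (n + 1) → k) → Projectivization k (Fin (n + 1) → k) :=
  Projectivization.map (scaleEquiv k n ζ).toLinearMap (scaleEquiv k n ζ).injective

/-- The involution `τ` of `ℙ^n` swapping the homogeneous coordinates `X_0` and `X_1`. -/
def swapP : Projectivization k (Fin (n + 1) → k) → Projectivization k (Fin (n + 1) → k) :=
  Projectivization.map (LinearEquiv.funCongrLeft k k (Equiv.swap (0 : Fin (n + 1)) 1)).toLinearMap
    (LinearEquiv.funCongrLeft k k (Equiv.swap (0 : Fin (n + 1)) 1)).injective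

/-- The automorphism `σ = (ζ,ζ^{-1},1,…,1)∘τ` of `ℙ^n`:
`(x_0:x_1:x_2:…) ↦ (ζx_1 : ζ^{-1}x_0 : x_2 : …)`. -/
def sigmaP (ζ : kˣ) :
    Projectivization k (Fin (n + 1) → k) → Projectivization k (Fin (n + 1) → k) :=
  scaleP k n (fun i => if i = 0 then ζ else if i = 1 then ζ⁻¹ else 1) ∘ swapP k n

section Aux
variable {k : Type*} [Field k] {n : ℕ}

open Projectivization in
lemma sigma_fixed_iff (hn : 2 ≤ n) (ζ : kˣ) (v : Fin (n+1) → k) (hv : v ≠ 0) :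
    sigmaP k n ζ (Projectivization.mk k v hv) = Projectivization.mk k v hv ↔
    ∃ c : kˣ, ((c:k) * v 0 = (ζ:k) * v 1 ∧ (c:k) * v 1 = ((ζ⁻¹:kˣ):k) * v 0 ∧
      ∀ i, i ≠ 0 → i ≠ 1 → (c:k) * v i = v i) := by
  have h01 : (0 : Fin (n+1)) ≠ 1 := by
    simp [Fin.ext_iff, Nat.mod_eq_of_lt (by omega : 1 < n+1)]
  have key : ∀ i, (scaleEquiv k n (fun i => if i = 0 then ζ else if i = 1 then ζ⁻¹ else 1)).toLinearMap
      ((LinearEquiv.funCongrLeft k k (Equiv.swap (0 : Fin (n + 1)) 1)).toLinearMap v) i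
      = (if i = 0 then (ζ:k) else if i = 1 then ((ζ⁻¹:kˣ):k) else 1)
        * v (Equiv.swap (0 : Fin (n+1)) 1 i) := by
    intro i
    simp only [scaleEquiv, LinearEquiv.funCongrLeft, LinearEquiv.piCongrRight,
      LinearEquiv.smulOfUnit, DistribMulAction.toLinearEquiv, Units.smul_def,
      smul_eq_mul, LinearEquiv.coe_mk, LinearMap.coe_mk, AddHom.coe_mk,
      LinearEquiv.coe_coe, LinearEquiv.arrowCongr_apply, LinearMap.id_coe, id_eq,
      LinearEquiv.refl_apply, Function.comp_apply]
    split_ifs <;> rfl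
  rw [sigmaP, Function.comp_apply, swapP, Projectivization.map_mk, scaleP,
    Projectivization.map_mk, Projectivization.mk_eq_mk_iff]
  constructor
  · rintro ⟨c, hc⟩
    refine ⟨c, ?_, ?_, fun i hi0 hi1 => ?_⟩
    · have h := (congrFun hc 0).trans (key 0)
      simpa [Units.smul_def, h01, Equiv.swap_apply_left] using h
    · have h := (congrFun hc 1).trans (key 1)
      simpa [Units.smul_def, h01.symm, Equiv.swap_apply_right] using h
    · have h := (congrFun hc i).trans (key i)
      simpa [Units.smul_def, hi0, hi1, Equiv.swap_apply_of_ne_of_ne hi0 hi1] using h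
  · rintro ⟨c, hc0, hc1, hrest⟩
    refine ⟨c, funext fun i => ?_⟩
    rw [key i]
    rcases eq_or_ne i 0 with rfl | hi0
    · simpa [Units.smul_def, h01, Equiv.swap_apply_left] using hc0
    rcases eq_or_ne i 1 with rfl | hi1
    · simpa [Units.smul_def, h01.symm, Equiv.swap_apply_right] using hc1
    · simpa [Units.smul_def, hi0, hi1, Equiv.swap_apply_of_ne_of_ne hi0 hi1] using hrest i hi0 hi1

lemma sum_two {m : ℕ} (hm : 0 < m) (hn : 2 ≤ n) (v : Fin (n+1) → k)
    (h : ∀ i, i ≠ 0 → i ≠ 1 → v i = 0) : ∑ i, v i ^ m = v 0 ^ m + v 1 ^ m := by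
  have h01 : (0 : Fin (n+1)) ≠ 1 := by
    simp [Fin.ext_iff, Nat.mod_eq_of_lt (by omega : 1 < n+1)]
  rw [← Finset.sum_subset (Finset.subset_univ ({0,1} : Finset (Fin (n+1))))
    (fun i _ hi => ?_), Finset.sum_pair h01]
  simp only [Finset.mem_insert, Finset.mem_singleton, not_or] at hi
  rw [h i hi.1 hi.2, zero_pow hm.ne']

end Aux

/-- over an algebraically closed field, the fixed point set in `X_λ` of the
involution `σ : (x_0:x_1:x_2:…) ↦ (ζx_1 : ζ^{-1}x_0 : x_2 : …)` is the hyperplane section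
`{X_0 − ζX_1 = 0} ∩ X_λ` for `n` odd, and additionally contains exactly the extra point
`(1 : −ζ^{-1} : 0 : ⋯ : 0)` for `n` even. -/
theorem stmt8 [IsAlgClosed k] (hn : 2 ≤ n) (hchar : (n + 1 : k) ≠ 0) (lam : k)
    (ζ : kˣ) (hζ : IsPrimitiveRoot (ζ : k) (n + 1))
    (hp : (fun i : Fin (n + 1) => if i = 0 then (1 : k) else if i = 1 then -(ζ⁻¹ : kˣ) else 0)
      ≠ 0) :
    (Odd n →
      {x ∈ dworkSet k n lam | sigmaP k n ζ x = x}
        = {x ∈ dworkSet k n lam | x.rep 0 - (ζ : k) * x.rep 1 = 0}) ∧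
    (Even n →
      {x ∈ dworkSet k n lam | sigmaP k n ζ x = x}
        = {x ∈ dworkSet k n lam | x.rep 0 - (ζ : k) * x.rep 1 = 0} ∪
          {Projectivization.mk k
            (fun i : Fin (n + 1) => if i = 0 then (1 : k) else if i = 1 then -(ζ⁻¹ : kˣ) else 0)
            hp}) := by
  
  classical
  have h01 : (0 : Fin (n+1)) ≠ 1 := by
    simp [Fin.ext_iff, Nat.mod_eq_of_lt (by omega : 1 < n+1)]
  set p : Fin (n+1) → k :=
    (fun i : Fin (n + 1) => if i = 0 then (1 : k) else if i = 1 then -(ζ⁻¹ : kˣ) else 0)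
    with hpdef
  have i2 : Fin (n+1) := ⟨2, by omega⟩
  have hi20 : (⟨2, by omega⟩ : Fin (n+1)) ≠ 0 := by simp [Fin.ext_iff]
  have hi21 : (⟨2, by omega⟩ : Fin (n+1)) ≠ 1 := by
    simp [Fin.ext_iff, Nat.mod_eq_of_lt (by omega : 1 < n+1)]
  have hz : (ζ:k)^(n+1) = 1 := hζ.pow_eq_one
  have hzinv : (((ζ⁻¹:kˣ)):k)^(n+1) = 1 := by
    have : ((ζ:k) * ((ζ⁻¹:kˣ):k))^(n+1) = 1 := by
      norm_num [← Units.val_mul]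
    rw [mul_pow, hz, one_mul] at this; exact this
  -- hyperplane points are fixed
  have A : ∀ x : Projectivization k (Fin (n+1) → k),
      x.rep 0 - (ζ:k) * x.rep 1 = 0 → sigmaP k n ζ x = x := by
    intro x hx
    rw [sub_eq_zero] at hx
    rw [← x.mk_rep, sigma_fixed_iff hn]
    refine ⟨1, by simpa using hx, ?_, fun i _ _ => by simp⟩
    rw [Units.val_one, one_mul, hx, ← mul_assoc]
    norm_num [← Units.val_mul]
  -- the special point is fixed
  have B : sigmaP k n ζ (Projectivization.mk k p hp) = Projectivization.mk k p hp := by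
    rw [sigma_fixed_iff hn]
    refine ⟨-1, ?_, ?_, fun i hi0 hi1 => ?_⟩
    · have key : (ζ:k) * ((ζ⁻¹:kˣ):k) = 1 := by norm_num [← Units.val_mul]
      simp only [hpdef, if_pos rfl, if_neg h01.symm, if_true, eq_self_iff_true, mul_one,
        Units.val_neg, Units.val_one, mul_neg, key]
    · simp [hpdef, h01, h01.symm]
    · simp [hpdef, hi0, hi1]
  -- special point is on X_lam when n is even
  have C : Even n → Projectivization.mk k p hp ∈ dworkSet k n lam := by
    intro hev
    obtain ⟨c, hc⟩ := Projectivization.exists_smul_eq_mk_rep k p hp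
    set w := (Projectivization.mk k p hp).rep with hw
    have hwc : ∀ i, w i = (c:k) * p i := fun i => (congrFun hc i).symm
    have hzero : ∀ i, i ≠ 0 → i ≠ 1 → w i = 0 := by
      intro i hi0 hi1; rw [hwc i]; simp [hpdef, hi0, hi1]
    have hsum : ∑ i, w i ^ (n+1) = 0 := by
      rw [sum_two (by omega) hn w hzero, hwc 0, hwc 1]
      simp only [hpdef, if_pos rfl, if_neg h01.symm, if_true, eq_self_iff_true, mul_one]
      rw [mul_neg, neg_pow, mul_pow, hzinv, Odd.neg_one_pow (Even.add_one hev)]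
      ring
    have hprod : ∏ i, w i = 0 :=
      Finset.prod_eq_zero (Finset.mem_univ (⟨2, by omega⟩ : Fin (n+1))) (hzero _ hi20 hi21)
    show ∑ i, w i ^ (n+1) + lam * ∏ i, w i = 0
    rw [hsum, hprod]; ring
  -- forward direction analysis
  have D : ∀ x : Projectivization k (Fin (n+1) → k), sigmaP k n ζ x = x →
      (x.rep 0 - (ζ:k) * x.rep 1 = 0 ∨
        (x.rep 1 ≠ 0 ∧ x.rep 0 = -(ζ:k) * x.rep 1 ∧
          ∀ i, i ≠ 0 → i ≠ 1 → x.rep i = 0)) := by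
    intro x hx
    rw [← x.mk_rep, sigma_fixed_iff hn] at hx
    obtain ⟨c, hc0, hc1, hrest⟩ := hx
    set v := x.rep with hv
    by_cases hbig : ∃ i, i ≠ 0 ∧ i ≠ 1 ∧ v i ≠ 0
    · obtain ⟨i, hi0, hi1, hvi⟩ := hbig
      have hc : (c:k) = 1 :=
        mul_right_cancel₀ hvi ((hrest i hi0 hi1).trans (one_mul (v i)).symm)
      left; rw [hc, one_mul] at hc0; rw [hc0]; ring
    · push_neg at hbig
      have hv1 : v 1 ≠ 0 := by
        intro h1
        have h0 : v 0 = 0 := by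
          have := hc1; rw [h1, mul_zero] at this
          have hz0 : ((ζ⁻¹:kˣ):k) ≠ 0 := Units.ne_zero _
          field_simp at this
          exact (mul_eq_zero.1 this.symm).resolve_left hz0
        exact x.rep_nonzero (funext fun i => by
          rcases eq_or_ne i 0 with rfl | hi0
          · exact h0
          rcases eq_or_ne i 1 with rfl | hi1
          · exact h1
          · exact hbig i hi0 hi1)
      have hcsq : ((c:k) - 1) * ((c:k) + 1) = 0 := by
        have e1 : (c:k) * ((c:k) * v 1) = v 1 := by
          rw [hc1, ← mul_assoc, mul_comm (c:k) _, mul_assoc, hc0, ← mul_assoc]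
          norm_num [← Units.val_mul]
        have : ((c:k)^2 - 1) * v 1 = 0 := by linear_combination e1
        rcases mul_eq_zero.1 this with h | h
        · linear_combination h
        · exact absurd h hv1
      rcases mul_eq_zero.1 hcsq with h | h
      · have hc : (c:k) = 1 := sub_eq_zero.1 h
        left; rw [hc, one_mul] at hc0; rw [hc0]; ring
      · have hc : (c:k) = -1 := eq_neg_of_add_eq_zero_left h
        right
        refine ⟨hv1, ?_, hbig⟩
        rw [hc] at hc0; linear_combination -hc0
  -- x = special point from the second alternative
  have E : ∀ x : Projectivization k (Fin (n+1) → k), x.rep 1 ≠ 0 →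
      x.rep 0 = -(ζ:k) * x.rep 1 → (∀ i, i ≠ 0 → i ≠ 1 → x.rep i = 0) →
      x = Projectivization.mk k p hp := by
    intro x hv1 hv0 hzero
    rw [← x.mk_rep, Projectivization.mk_eq_mk_iff]
    refine ⟨(-ζ) * Units.mk0 (x.rep 1) hv1, funext fun i => ?_⟩
    have key : (ζ:k) * ((ζ⁻¹:kˣ):k) = 1 := by norm_num [← Units.val_mul]
    rcases eq_or_ne i 0 with rfl | hi0
    · have hp0 : p 0 = (1:k) := by simp [hpdef]
      rw [Pi.smul_apply, Units.smul_def, smul_eq_mul, hp0, mul_one, Units.val_mul, Units.val_neg,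
        Units.val_mk0, hv0]
    rcases eq_or_ne i 1 with rfl | hi1
    · have hp1 : p 1 = -((ζ⁻¹:kˣ):k) := by simp [hpdef, h01.symm]
      rw [Pi.smul_apply, Units.smul_def, smul_eq_mul, hp1, Units.val_mul, Units.val_neg, Units.val_mk0]
      linear_combination x.rep 1 * key
    · have hpi : p i = 0 := by simp [hpdef, hi0, hi1]
      rw [Pi.smul_apply, Units.smul_def, smul_eq_mul, hpi, mul_zero, hzero i hi0 hi1]
  constructor
  · -- odd case
    intro hodd
    have h2 : (2:k) ≠ 0 := by
      intro h2
      obtain ⟨m, hm⟩ := hodd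
      apply hchar
      have : ((n:k) + 1) = 2 * ((m:k) + 1) := by rw_mod_cast [hm]; push_cast; ring
      rw [this, h2, zero_mul]
    ext x
    simp only [Set.mem_setOf_eq]
    constructor
    · rintro ⟨hD, hfix⟩
      refine ⟨hD, ?_⟩
      rcases D x hfix with h | ⟨hv1, hv0, hzero⟩
      · exact h
      · exfalso
        have hprod : ∏ i, x.rep i = 0 :=
          Finset.prod_eq_zero (Finset.mem_univ (⟨2, by omega⟩ : Fin (n+1))) (hzero _ hi20 hi21)
        have hsum : ∑ i, x.rep i ^ (n+1) = 2 * x.rep 1 ^ (n+1) := by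
          rw [sum_two (by omega) hn _ hzero, hv0, mul_pow, neg_pow, hz,
            Even.neg_one_pow (by exact Odd.add_one hodd)]
          ring
        have hD' : ∑ i, x.rep i ^ (n+1) + lam * ∏ i, x.rep i = 0 := hD
        rw [hsum, hprod, mul_zero, add_zero] at hD'
        rcases mul_eq_zero.1 hD' with h | h
        · exact h2 h
        · exact hv1 (pow_eq_zero_iff (by omega) |>.1 h)
    · rintro ⟨hD, hhyp⟩
      exact ⟨hD, A x hhyp⟩
  · -- even case
    intro hev
    ext x
    simp only [Set.mem_setOf_eq, Set.mem_union, Set.mem_singleton_iff]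
    constructor
    · rintro ⟨hD, hfix⟩
      rcases D x hfix with h | ⟨hv1, hv0, hzero⟩
      · exact Or.inl ⟨hD, h⟩
      · exact Or.inr (E x hv1 hv0 hzero)
    · rintro (⟨hD, hhyp⟩ | rfl)
      · exact ⟨hD, A x hhyp⟩
      · exact ⟨C hev, B⟩
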